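/- arXiv:math/0412243 — 2 statements merged into one kernel-verified Lean document; each statement's English description precedes it below -/
import Mathlib

section
/- For every row-finite directed graph E, the graph monoid M_E is a refinement monoid: whenever a + b = c + d in M_E, there exist x, y, z, t ∈ M_E with a = x + y, b = z + t, c = x + z and d = y + t. -/
/-- A row-finite directed graph: vertex set `V`, edge set `Edge`,
source and range maps, with every vertex emitting finitely many edges. -/
structure RFGraph where
  V : Type
  Edge : Type
  s : Edge → V
  r : Edge → V
  rowFinite : ∀ v : V, {e : Edge | s e = v}.Finite

namespace RFGraph

/-- The free abelian monoid on the vertex set. -/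
abbrev F (G : RFGraph) : Type := G.V →₀ ℕ

/-- `v` emits at least one edge. -/
def emits (G : RFGraph) (v : G.V) : Prop := ∃ e : G.Edge, G.s e = v

/-- `𝐫(v) = Σ_{e ∈ s⁻¹(v)} r(e)` in the free abelian monoid. -/
noncomputable def rr (G : RFGraph) (v : G.V) : G.F :=
  ∑ e ∈ (G.rowFinite v).toFinset, Finsupp.single (G.r e) 1

/-- The one-step relation `→₁`: `α →₁ β` iff `α = x + α'` for a vertex `x`
emitting at least one edge, and `β = 𝐫(x) + α'`. -/
def step (G : RFGraph) (α β : G.F) : Prop :=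
  ∃ (x : G.V) (α' : G.F), G.emits x ∧ α = Finsupp.single x 1 + α' ∧ β = G.rr x + α'

/-- The reflexive-transitive closure `→` of `→₁`. -/
def steps (G : RFGraph) : G.F → G.F → Prop := Relation.ReflTransGen G.step

/-- The additive congruence `∼` on `F_E` generated by `→₁`. -/
noncomputable def graphCon (G : RFGraph) : AddCon G.F := addConGen G.step

/-- The graph monoid `M_E = F_E/∼`. -/
abbrev M (G : RFGraph) : Type := G.graphCon.Quotient

/-- The class `a_v` of a vertex `v` in the graph monoid. -/
noncomputable def av (G : RFGraph) (v : G.V) : G.M := G.graphCon.mk' (Finsupp.single v 1)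

end RFGraph

namespace RFGraph
variable {G : RFGraph}

open scoped Classical in
lemma single_app (y v : G.V) :
    (Finsupp.single y 1 : G.F) v = if y = v then 1 else 0 := by
  rw [Finsupp.single_apply]

lemma step_add_right {α β : G.F} (h : G.step α β) (δ : G.F) : G.step (α + δ) (β + δ) := by
  obtain ⟨x, α', hx, rfl, rfl⟩ := h
  exact ⟨x, α' + δ, hx, by abel, by abel⟩

lemma steps_add_right {α β : G.F} (h : G.steps α β) (δ : G.F) : G.steps (α + δ) (β + δ) := by
  induction h with
  | refl => exact Relation.ReflTransGen.refl
  | tail _ h ih => exact ih.tail (step_add_right h δ)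

lemma steps_add {α β γ δ : G.F} (h1 : G.steps α β) (h2 : G.steps γ δ) :
    G.steps (α + γ) (β + δ) := by
  refine (steps_add_right h1 γ).trans ?_
  rw [add_comm β γ, add_comm β δ]
  exact steps_add_right h2 β

/-- local confluence / diamond -/
lemma step_diamond {α β γ : G.F} (h1 : G.step α β) (h2 : G.step α γ) :
    β = γ ∨ ∃ δ, G.step β δ ∧ G.step γ δ := by
  obtain ⟨x, α', hx, hα1, rfl⟩ := h1
  obtain ⟨y, α'', hy, hα2, rfl⟩ := h2
  by_cases hxy : x = y
  · subst hxy
    left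
    have : α' = α'' := by
      have h := hα1.symm.trans hα2
      exact add_left_cancel h
    rw [this]
  · right
    set ρ : G.F := α' - Finsupp.single y 1 with hρ
    have hα' : α' = Finsupp.single y 1 + ρ := by
      ext v
      have h := DFunLike.congr_fun (hα1.symm.trans hα2) v
      simp only [Finsupp.add_apply, hρ, Finsupp.tsub_apply, single_app] at h ⊢
      split_ifs at h ⊢ with h1 h2 <;>
        first
        | omega
        | exact absurd (h1.trans h2.symm) hxy
        | exact absurd (h2.trans h1.symm) hxy
    have hα'' : α'' = Finsupp.single x 1 + ρ := by
      ext v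
      have h := DFunLike.congr_fun (hα1.symm.trans hα2) v
      simp only [Finsupp.add_apply, hρ, Finsupp.tsub_apply, single_app] at h ⊢
      split_ifs at h ⊢ with h1 h2 <;>
        first
        | omega
        | exact absurd (h1.trans h2.symm) hxy
        | exact absurd (h2.trans h1.symm) hxy
    refine ⟨G.rr x + G.rr y + ρ, ⟨y, G.rr x + ρ, hy, by rw [hα']; abel, by abel⟩,
      ⟨x, G.rr y + ρ, hx, by rw [hα'']; abel, by abel⟩⟩

lemma steps_join_equivalence : Equivalence (Relation.Join G.steps) := by
  apply Relation.equivalence_join_reflTransGen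
  intro a b c h1 h2
  rcases step_diamond h1 h2 with rfl | ⟨d, hbd, hcd⟩
  · exact ⟨b, Relation.ReflGen.refl, Relation.ReflTransGen.refl⟩
  · exact ⟨d, Relation.ReflGen.single hbd, Relation.ReflTransGen.single hcd⟩

/-- The join of steps as an additive congruence. -/
def joinCon (G : RFGraph) : AddCon G.F where
  r := Relation.Join G.steps
  iseqv := steps_join_equivalence
  add' := fun ⟨e, h1, h2⟩ ⟨f, h3, h4⟩ => ⟨e + f, steps_add h1 h3, steps_add h2 h4⟩

lemma graphCon_le_join : G.graphCon ≤ G.joinCon :=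
  AddCon.addConGen_le.mpr fun x y h =>
    ⟨y, Relation.ReflTransGen.single h, Relation.ReflTransGen.refl⟩

lemma steps_graphCon {α β : G.F} (h : G.steps α β) : G.graphCon α β := by
  induction h with
  | refl => exact G.graphCon.refl _
  | tail _ h ih => exact G.graphCon.trans ih (AddConGen.Rel.of _ _ h)

lemma step_decomp {α β ε : G.F} (h : G.step (α + β) ε) :
    (∃ α', G.step α α' ∧ ε = α' + β) ∨ (∃ β', G.step β β' ∧ ε = α + β') := by
  obtain ⟨x, γ, hx, hsum, rfl⟩ := h
  have hxval : α x + β x = 1 + γ x := by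
    have := DFunLike.congr_fun hsum x
    rw [Finsupp.add_apply, Finsupp.add_apply, single_app] at this
    simpa using this
  by_cases hα : 1 ≤ α x
  · left
    have hαeq : α = Finsupp.single x 1 + (α - Finsupp.single x 1) := by
      ext v
      simp only [Finsupp.add_apply, single_app, Finsupp.tsub_apply]
      split_ifs with hv
      · subst hv; omega
      · omega
    have hγ : γ = (α - Finsupp.single x 1) + β := by
      ext v
      have hv2 := DFunLike.congr_fun hsum v
      simp only [Finsupp.add_apply, single_app, Finsupp.tsub_apply] at hv2 ⊢
      split_ifs at hv2 ⊢ with hv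
      · subst hv; omega
      · omega
    exact ⟨G.rr x + (α - Finsupp.single x 1), ⟨x, _, hx, hαeq, rfl⟩,
      by rw [hγ, ← add_assoc]⟩
  · right
    have hβ : 1 ≤ β x := by omega
    have hβeq : β = Finsupp.single x 1 + (β - Finsupp.single x 1) := by
      ext v
      simp only [Finsupp.add_apply, single_app, Finsupp.tsub_apply]
      split_ifs with hv
      · subst hv; omega
      · omega
    have hγ : γ = α + (β - Finsupp.single x 1) := by
      ext v
      have hv2 := DFunLike.congr_fun hsum v
      simp only [Finsupp.add_apply, single_app, Finsupp.tsub_apply] at hv2 ⊢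
      split_ifs at hv2 ⊢ with hv
      · subst hv; omega
      · omega
    exact ⟨G.rr x + (β - Finsupp.single x 1), ⟨x, _, hx, hβeq, rfl⟩,
      by rw [hγ]; exact add_left_comm _ _ _⟩

lemma steps_decomp {α β ε : G.F} (h : G.steps (α + β) ε) :
    ∃ α₁ β₁, ε = α₁ + β₁ ∧ G.steps α α₁ ∧ G.steps β β₁ := by
  suffices H : ∀ σ, G.steps σ ε → ∀ α β : G.F, σ = α + β →
      ∃ α₁ β₁, ε = α₁ + β₁ ∧ G.steps α α₁ ∧ G.steps β β₁ from H _ h α β rfl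
  intro σ hσ
  induction hσ using Relation.ReflTransGen.head_induction_on with
  | refl =>
    intro α β h
    exact ⟨α, β, h, Relation.ReflTransGen.refl, Relation.ReflTransGen.refl⟩
  | head hstep _ ih =>
    rintro α β rfl
    rcases step_decomp hstep with ⟨α', hαα', heq⟩ | ⟨β', hββ', heq⟩
    · obtain ⟨α₁, β₁, rfl, h1, h2⟩ := ih α' β heq
      exact ⟨α₁, β₁, rfl, (Relation.ReflTransGen.single hαα').trans h1, h2⟩
    · obtain ⟨α₁, β₁, rfl, h1, h2⟩ := ih α β' heq
      exact ⟨α₁, β₁, rfl, h1, (Relation.ReflTransGen.single hββ').trans h2⟩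

lemma free_refinement (α β γ δ : G.F) (h : α + β = γ + δ) :
    ∃ x y z t : G.F, α = x + y ∧ β = z + t ∧ γ = x + z ∧ δ = y + t := by
  refine ⟨α - (α - γ), α - γ, γ - α, β - (γ - α), ?_, ?_, ?_, ?_⟩ <;>
  · ext v
    have := DFunLike.congr_fun h v
    simp only [Finsupp.add_apply, Finsupp.tsub_apply] at this ⊢
    omega

lemma mk_eq_of_steps {α β : G.F} (h : G.steps α β) :
    G.graphCon.mk' α = G.graphCon.mk' β :=
  (AddCon.eq _).mpr (steps_graphCon h)

end RFGraph

/-- The graph monoid `M_E` of a row-finite graph is a refinement monoid. -/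
theorem stmt2 (G : RFGraph) (a b c d : G.M) (h : a + b = c + d) :
    ∃ x y z t : G.M, a = x + y ∧ b = z + t ∧ c = x + z ∧ d = y + t := by
  obtain ⟨α, rfl⟩ := Quotient.exists_rep a
  obtain ⟨β, rfl⟩ := Quotient.exists_rep b
  obtain ⟨γ, rfl⟩ := Quotient.exists_rep c
  obtain ⟨δ, rfl⟩ := Quotient.exists_rep d
  have hcoe : ∀ f : G.F, (⟦f⟧ : G.M) = G.graphCon.mk' f := fun f => rfl
  simp only [hcoe] at h ⊢
  rw [← map_add, ← map_add] at h
  have hcon : G.graphCon (α + β) (γ + δ) := (AddCon.eq _).mp h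
  obtain ⟨ε, h1, h2⟩ : Relation.Join G.steps (α + β) (γ + δ) :=
    AddCon.le_def.mp RFGraph.graphCon_le_join hcon
  obtain ⟨α₁, β₁, rfl, hα, hβ⟩ := RFGraph.steps_decomp h1
  obtain ⟨γ₁, δ₁, hε2, hγ, hδ⟩ := RFGraph.steps_decomp h2
  obtain ⟨x, y, z, t, hxy, hzt, hxz, hyt⟩ := RFGraph.free_refinement α₁ β₁ γ₁ δ₁ hε2
  refine ⟨G.graphCon.mk' x, G.graphCon.mk' y, G.graphCon.mk' z, G.graphCon.mk' t,
    ?_, ?_, ?_, ?_⟩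
  · rw [RFGraph.mk_eq_of_steps hα, hxy, map_add]
  · rw [RFGraph.mk_eq_of_steps hβ, hzt, map_add]
  · rw [RFGraph.mk_eq_of_steps hγ, hxz, map_add]
  · rw [RFGraph.mk_eq_of_steps hδ, hyt, map_add]
end

section
/- For every finite directed graph E (finitely many vertices and edges), the graph monoid M_E is primely generated: every element of M_E is a finite sum of prime elements. -/
/-- The algebraic pre-order on the graph monoid: `x ≤ y` iff `∃ z, y = x + z`. -/
def RFGraph.mle (G : RFGraph) (x y : G.M) : Prop := ∃ z : G.M, y = x + z

/-- A prime element of the graph monoid. -/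
def RFGraph.IsPrime (G : RFGraph) (p : G.M) : Prop :=
  ∀ a₁ a₂ : G.M, G.mle p (a₁ + a₂) → G.mle p a₁ ∨ G.mle p a₂

namespace RFGraph

variable {G : RFGraph}

/-! ### Basic finsupp facts -/

lemma split_of_one_le {x : G.V} {f : G.F} (h : 1 ≤ f x) :
    f = Finsupp.single x 1 + (f - Finsupp.single x 1) :=
  (add_tsub_cancel_of_le (Finsupp.single_le_iff.mpr h)).symm

lemma mem_rowFinset {e : G.Edge} {v : G.V} (h : G.s e = v) :
    e ∈ (G.rowFinite v).toFinset := by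
  simpa [Set.Finite.mem_toFinset] using h

lemma one_le_rr_apply {e : G.Edge} {v : G.V} (h : G.s e = v) :
    1 ≤ G.rr v (G.r e) := by
  have hle : Finsupp.single (G.r e) 1 ≤ G.rr v :=
    Finset.single_le_sum (f := fun e => Finsupp.single (G.r e) (1:ℕ))
      (fun i _ => zero_le) (mem_rowFinset h)
  simpa using Finsupp.single_le_iff.mp hle

lemma rr_ne_zero {v : G.V} (h : G.emits v) : G.rr v ≠ 0 := by
  obtain ⟨e, he⟩ := h
  intro h0
  have := one_le_rr_apply he
  rw [h0] at this
  simp at this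

/-! ### Step and steps basics -/

lemma step_add {a b c : G.F} (h : G.step a b) : G.step (a + c) (b + c) := by
  obtain ⟨x, α', hx, ha, hb⟩ := h
  exact ⟨x, α' + c, hx, by rw [ha, add_assoc], by rw [hb, add_assoc]⟩

lemma steps_add_s3 {a b : G.F} (h : G.steps a b) (c : G.F) : G.steps (a + c) (b + c) := by
  induction h with
  | refl => exact Relation.ReflTransGen.refl
  | tail _ hstep ih => exact ih.tail (step_add hstep)

lemma steps_ne_zero {a b : G.F} (h : G.steps a b) (ha : a ≠ 0) : b ≠ 0 := by
  induction h with
  | refl => exact ha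
  | tail _ hstep _ =>
    obtain ⟨x, α', hx, _, hb⟩ := hstep
    intro h0
    rw [hb] at h0
    exact rr_ne_zero hx (by simpa using (add_eq_zero.mp h0).1)

/-! ### The congruence is the equivalence closure of `step` -/

lemma eqvGen_add_right {a b c : G.F} (h : Relation.EqvGen G.step a b) :
    Relation.EqvGen G.step (a + c) (b + c) := by
  induction h with
  | rel x y hxy => exact Relation.EqvGen.rel _ _ (step_add hxy)
  | refl x => exact Relation.EqvGen.refl _
  | symm x y _ ih => exact ih.symm _ _
  | trans x y z _ _ ih1 ih2 => exact ih1.trans _ _ _ ih2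

lemma graphCon_iff_eqvGen {a b : G.F} : G.graphCon a b ↔ Relation.EqvGen G.step a b := by
  constructor
  · intro h
    have h' : AddConGen.Rel G.step a b := h
    clear h
    induction h' with
    | of x y hxy => exact Relation.EqvGen.rel _ _ hxy
    | refl x => exact Relation.EqvGen.refl _
    | symm _ ih => exact ih.symm _ _
    | trans _ _ ih1 ih2 => exact ih1.trans _ _ _ ih2
    | add _ _ ih1 ih2 =>
      rename_i w x y z _ _
      have h1 : Relation.EqvGen G.step (w + y) (x + y) := eqvGen_add_right ih1
      have h2 : Relation.EqvGen G.step (x + y) (x + z) := by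
        have := eqvGen_add_right (c := x) ih2
        simpa [add_comm] using this
      exact h1.trans _ _ _ h2
  · intro h
    induction h with
    | rel x y hxy => exact AddConGen.Rel.of _ _ hxy
    | refl x => exact AddConGen.Rel.refl _
    | symm x y _ ih => exact AddConGen.Rel.symm ih
    | trans x y z _ _ ih1 ih2 => exact AddConGen.Rel.trans ih1 ih2

lemma steps_eqvGen {a b : G.F} (h : G.steps a b) : Relation.EqvGen G.step a b := by
  induction h with
  | refl => exact Relation.EqvGen.refl _
  | tail _ hstep ih => exact ih.trans _ _ _ (Relation.EqvGen.rel _ _ hstep)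

/-! ### Confluence -/

lemma diamond {a b c : G.F} (hab : G.step a b) (hac : G.step a c) :
    ∃ d, Relation.ReflGen G.step b d ∧ Relation.ReflTransGen G.step c d := by
  obtain ⟨x, α', hx, hax, hbx⟩ := hab
  obtain ⟨y, β', hy, hay, hcy⟩ := hac
  by_cases hxy : x = y
  · subst hxy
    have : α' = β' := add_left_cancel (hax ▸ hay)
    subst this
    exact ⟨b, Relation.ReflGen.refl, by rw [hbx, ← hcy]⟩
  · -- x ≠ y : both have coefficient ≥ 1 in a
    have hyα : 1 ≤ α' y := by
      have h1 := DFunLike.congr_fun hax y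
      have h2 := DFunLike.congr_fun hay y
      simp [Finsupp.single_apply, hxy] at h1 h2
      omega
    set τ := α' - Finsupp.single y 1 with hτ
    have hα' : α' = Finsupp.single y 1 + τ := split_of_one_le hyα
    have hβ' : β' = Finsupp.single x 1 + τ := by
      have : Finsupp.single y 1 + β' = Finsupp.single y 1 + (Finsupp.single x 1 + τ) := by
        rw [← hay, hax, hα']; abel
      exact add_left_cancel this
    refine ⟨G.rr x + G.rr y + τ, Relation.ReflGen.single ?_, Relation.ReflTransGen.single ?_⟩
    · exact ⟨y, G.rr x + τ, hy, by rw [hbx, hα']; abel, by abel⟩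
    · exact ⟨x, G.rr y + τ, hx, by rw [hcy, hβ']; abel, by abel⟩

lemma graphCon_iff_join {a b : G.F} :
    G.graphCon a b ↔ ∃ c, G.steps a c ∧ G.steps b c := by
  rw [graphCon_iff_eqvGen]
  constructor
  · intro h
    induction h with
    | rel x y hxy => exact ⟨y, Relation.ReflTransGen.single hxy, Relation.ReflTransGen.refl⟩
    | refl x => exact ⟨x, Relation.ReflTransGen.refl, Relation.ReflTransGen.refl⟩
    | symm x y _ ih => obtain ⟨c, h1, h2⟩ := ih; exact ⟨c, h2, h1⟩
    | trans x y z _ _ ih1 ih2 =>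
      obtain ⟨c, h1, h2⟩ := ih1
      obtain ⟨d, h3, h4⟩ := ih2
      obtain ⟨e, he1, he2⟩ :=
        Relation.church_rosser (fun a b c hab hac => diamond hab hac) h2 h3
      exact ⟨e, h1.trans he1, h4.trans he2⟩
  · rintro ⟨c, h1, h2⟩
    exact (steps_eqvGen h1).trans _ _ _ ((steps_eqvGen h2).symm _ _)

/-! ### Splitting rewriting sequences -/

lemma step_split {m₁ m₂ γ : G.F} (h : G.step (m₁ + m₂) γ) :
    (∃ γ₁, G.step m₁ γ₁ ∧ γ = γ₁ + m₂) ∨ (∃ γ₂, G.step m₂ γ₂ ∧ γ = m₁ + γ₂) := by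
  obtain ⟨x, m', hx, hm, hγ⟩ := h
  have hsum : 1 ≤ m₁ x + m₂ x := by
    have h1 := DFunLike.congr_fun hm x
    simp [Finsupp.single_apply] at h1
    omega
  by_cases h1 : 1 ≤ m₁ x
  · left
    set τ := m₁ - Finsupp.single x 1 with hτ
    have hm₁ : m₁ = Finsupp.single x 1 + τ := split_of_one_le h1
    have hm' : m' = τ + m₂ := by
      apply add_left_cancel (a := Finsupp.single x 1)
      rw [← hm, hm₁]; abel
    exact ⟨G.rr x + τ, ⟨x, τ, hx, hm₁, rfl⟩, by rw [hγ, hm']; abel⟩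
  · right
    have h2 : 1 ≤ m₂ x := by omega
    set τ := m₂ - Finsupp.single x 1 with hτ
    have hm₂ : m₂ = Finsupp.single x 1 + τ := split_of_one_le h2
    have hm' : m' = m₁ + τ := by
      apply add_left_cancel (a := Finsupp.single x 1)
      rw [← hm, hm₂]; abel
    exact ⟨G.rr x + τ, ⟨x, τ, hx, hm₂, rfl⟩, by rw [hγ, hm']; abel⟩

lemma steps_split {α β γ : G.F} (h : G.steps (α + β) γ) :
    ∃ γ₁ γ₂, G.steps α γ₁ ∧ G.steps β γ₂ ∧ γ = γ₁ + γ₂ := by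
  induction h with
  | refl => exact ⟨α, β, Relation.ReflTransGen.refl, Relation.ReflTransGen.refl, rfl⟩
  | tail _ hstep ih =>
    obtain ⟨m₁, m₂, h1, h2, rfl⟩ := ih
    rcases step_split hstep with ⟨γ₁, hs, rfl⟩ | ⟨γ₂, hs, rfl⟩
    · exact ⟨γ₁, m₂, h1.tail hs, h2, rfl⟩
    · exact ⟨m₁, γ₂, h1, h2.tail hs, rfl⟩

/-! ### Reachability -/

/-- `v` reaches `w` by a directed path. -/
def Reaches (G : RFGraph) : G.V → G.V → Prop :=
  Relation.ReflTransGen (fun a b => ∃ e, G.s e = a ∧ G.r e = b)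

lemma supp_reach {α β : G.F} (h : G.steps α β) :
    ∀ w, β w ≠ 0 → ∃ v, α v ≠ 0 ∧ G.Reaches v w := by
  induction h with
  | refl => exact fun w hw => ⟨w, hw, Relation.ReflTransGen.refl⟩
  | @tail m β' _ hstep ih =>
    obtain ⟨x, m', hx, hm, hβ⟩ := hstep
    intro w hw
    rw [hβ] at hw
    simp only [Finsupp.add_apply] at hw
    by_cases hm' : m' w ≠ 0
    · refine ih w ?_
      rw [hm]
      simp only [Finsupp.add_apply]
      omega
    · have hrx : G.rr x w ≠ 0 := by omega
      -- w = r e for some e with s e = x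
      have hex : ∃ e ∈ (G.rowFinite x).toFinset, (Finsupp.single (G.r e) (1:ℕ)) w ≠ 0 := by
        by_contra hc
        push_neg at hc
        refine hrx ?_
        rw [rr, Finsupp.finset_sum_apply]
        exact Finset.sum_eq_zero fun e he => hc e he
      obtain ⟨e, he, hew⟩ := hex
      have hse : G.s e = x := by simpa [Set.Finite.mem_toFinset] using he
      have hrew : G.r e = w := by
        by_contra hne; simp [Finsupp.single_apply, hne] at hew
      have hxmem : m x ≠ 0 := by
        rw [hm]
        simp [Finsupp.single_apply]
      obtain ⟨v, hv, hreach⟩ := ih x hxmem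
      exact ⟨v, hv, hreach.tail ⟨e, hse, hrew⟩⟩

lemma path_steps {w v : G.V} (h : G.Reaches w v) :
    ∃ σ, G.steps (Finsupp.single w 1) (Finsupp.single v 1 + σ) := by
  induction h using Relation.ReflTransGen.head_induction_on with
  | refl => exact ⟨0, by rw [add_zero]; exact Relation.ReflTransGen.refl⟩
  | head hedge _ ih =>
    rename_i a c _
    obtain ⟨e, hse, hre⟩ := hedge
    obtain ⟨σ, hσ⟩ := ih
    have hemits : G.emits a := ⟨e, hse⟩
    have h1 : G.step (Finsupp.single a 1) (G.rr a) :=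
      ⟨a, 0, hemits, by simp, by simp⟩
    have hle : 1 ≤ G.rr a c := hre ▸ one_le_rr_apply hse
    set ρ := G.rr a - Finsupp.single c 1 with hρ
    have hrra : G.rr a = Finsupp.single c 1 + ρ := split_of_one_le hle
    have h2 : G.steps (Finsupp.single c 1 + ρ) (Finsupp.single v 1 + σ + ρ) :=
      steps_add_s3 hσ ρ
    refine ⟨σ + ρ, Relation.ReflTransGen.head h1 ?_⟩
    rw [hrra, ← add_assoc]
    exact steps_add_s3 hσ ρ

/-! ### Good vertices give primes -/

/-- A vertex is *good* if either every vertex it reaches can reach it back,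
or it lies on a (nonempty) cycle. -/
def Good (G : RFGraph) (v : G.V) : Prop :=
  (∀ w, G.Reaches v w → G.Reaches w v) ∨ ∃ e, G.s e = v ∧ G.Reaches (G.r e) v

lemma good_invariant {v : G.V} (hg : G.Good v) {δ : G.F}
    (h : G.steps (Finsupp.single v 1) δ) : ∃ w, 1 ≤ δ w ∧ G.Reaches w v := by
  rcases hg with hmin | ⟨e₀, hs₀, hc₀⟩
  · -- minimal case
    have hδ : δ ≠ 0 := steps_ne_zero h (by simp)
    obtain ⟨w, hw⟩ := Finsupp.support_nonempty_iff.mpr hδ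
    have hw' : δ w ≠ 0 := Finsupp.mem_support_iff.mp hw
    obtain ⟨u, hu, hreach⟩ := supp_reach h w hw'
    have : u = v := by
      by_contra hne
      simp [Finsupp.single_apply, Ne.symm hne] at hu
    subst this
    exact ⟨w, by omega, hmin w hreach⟩
  · -- cycle case: induction maintaining a witness
    induction h with
    | refl => exact ⟨v, by simp, Relation.ReflTransGen.refl⟩
    | tail _ hstep ih =>
      obtain ⟨w, hw, hreach⟩ := ih
      obtain ⟨x, m', hx, hm, hβ⟩ := hstep
      by_cases hm' : 1 ≤ m' w
      · exact ⟨w, by rw [hβ]; simp only [Finsupp.add_apply]; omega, hreach⟩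
      · have hwx : w = x := by
          by_contra hne
          have h1 := DFunLike.congr_fun hm w
          simp [Finsupp.single_apply, Ne.symm hne] at h1
          omega
        subst hwx
        rcases Relation.ReflTransGen.cases_head hreach with rfl | ⟨u, ⟨e, hse, hre⟩, hu⟩
        · -- w = v, use the cycle edge
          refine ⟨G.r e₀, ?_, hc₀⟩
          rw [hβ]
          have := one_le_rr_apply hs₀
          simp only [Finsupp.add_apply]; omega
        · refine ⟨u, ?_, hu⟩
          rw [hβ]
          have := one_le_rr_apply hse
          rw [hre] at this
          simp only [Finsupp.add_apply]; omega

lemma mk'_eq_iff {a b : G.F} : G.graphCon.mk' a = G.graphCon.mk' b ↔ G.graphCon a b :=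
  G.graphCon.eq

lemma mle_of_reduct {v w : G.V} {α γ' : G.F} (hsteps : G.steps α γ')
    (hw : 1 ≤ γ' w) (hreach : G.Reaches w v) :
    G.mle (G.av v) (G.graphCon.mk' α) := by
  set τ := γ' - Finsupp.single w 1 with hτ
  have hγ' : γ' = Finsupp.single w 1 + τ := split_of_one_le hw
  obtain ⟨σ, hσ⟩ := path_steps hreach
  have h2 : G.steps γ' (Finsupp.single v 1 + σ + τ) := by
    rw [hγ']
    exact steps_add_s3 hσ τ
  have hcon : G.graphCon α (Finsupp.single v 1 + (σ + τ)) := by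
    rw [graphCon_iff_join]
    exact ⟨Finsupp.single v 1 + σ + τ, hsteps.trans h2, by rw [← add_assoc]; exact Relation.ReflTransGen.refl⟩
  refine ⟨G.graphCon.mk' (σ + τ), ?_⟩
  rw [mk'_eq_iff.mpr hcon, map_add]
  rfl

lemma good_prime {v : G.V} (hg : G.Good v) : G.IsPrime (G.av v) := by
  intro a₁ a₂ ⟨z, hz⟩
  obtain ⟨α₁, rfl⟩ := G.graphCon.mk'_surjective a₁
  obtain ⟨α₂, rfl⟩ := G.graphCon.mk'_surjective a₂
  obtain ⟨ζ, rfl⟩ := G.graphCon.mk'_surjective z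
  have hcon : G.graphCon (α₁ + α₂) (Finsupp.single v 1 + ζ) := by
    apply mk'_eq_iff.mp
    rw [map_add, map_add]
    exact hz
  rw [graphCon_iff_join] at hcon
  obtain ⟨γ, h1, h2⟩ := hcon
  obtain ⟨δ, ε, hδ, hε, hγ⟩ := steps_split h2
  obtain ⟨w, hwδ, hreach⟩ := good_invariant hg hδ
  obtain ⟨γ₁, γ₂, hγ₁, hγ₂, hγ'⟩ := steps_split h1
  have hwγ : 1 ≤ γ w := by rw [hγ]; simp only [Finsupp.add_apply]; omega
  rw [hγ'] at hwγ
  simp only [Finsupp.add_apply] at hwγ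
  by_cases h : 1 ≤ γ₁ w
  · exact Or.inl (mle_of_reduct hγ₁ h hreach)
  · exact Or.inr (mle_of_reduct hγ₂ (by omega) hreach)

/-! ### Multiset helpers -/

lemma nsmul_mem {l : Multiset G.M} {p : G.M} {n : ℕ} (h : p ∈ n • l) : p ∈ l := by
  induction n with
  | zero => simp at h
  | succ k ih =>
    rw [succ_nsmul, Multiset.mem_add] at h
    exact h.elim ih id

lemma nsmul_sum (n : ℕ) (l : Multiset G.M) : (n • l).sum = n • l.sum := by
  induction n with
  | zero => simp [zero_nsmul]
  | succ k ih => rw [succ_nsmul, succ_nsmul, Multiset.sum_add, ih]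

/-! ### Decomposition of generators into good generators -/

lemma reaches_of_edge_reaches {u w : G.V} (e : G.Edge) (hse : G.s e = u)
    (h : G.Reaches (G.r e) w) : G.Reaches u w :=
  Relation.ReflTransGen.head ⟨e, hse, rfl⟩ h

lemma av_eq_sum_rr (u : G.V) (hu : G.emits u) :
    G.av u = ∑ e ∈ (G.rowFinite u).toFinset, G.av (G.r e) := by
  have hstep : G.step (Finsupp.single u 1) (G.rr u) := ⟨u, 0, hu, by simp, by simp⟩
  have hcon : G.graphCon (Finsupp.single u 1) (G.rr u) := by
    rw [graphCon_iff_join]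
    exact ⟨G.rr u, Relation.ReflTransGen.single hstep, Relation.ReflTransGen.refl⟩
  rw [av, mk'_eq_iff.mpr hcon, rr, map_sum]
  rfl

lemma av_sum_good [Finite G.V] (u : G.V) :
    ∃ l : Multiset G.M, (∀ p ∈ l, ∃ v, G.Good v ∧ p = G.av v) ∧ l.sum = G.av u := by
  classical
  haveI := Fintype.ofFinite G.V
  -- strong induction on the size of the reach set
  suffices H : ∀ n (u : G.V), (Set.toFinite {w | G.Reaches u w}).toFinset.card ≤ n →
      ∃ l : Multiset G.M, (∀ p ∈ l, ∃ v, G.Good v ∧ p = G.av v) ∧ l.sum = G.av u by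
    exact H _ u le_rfl
  intro n
  induction n with
  | zero =>
    intro u hcard
    exfalso
    have : u ∈ (Set.toFinite {w | G.Reaches u w}).toFinset := by
      simp [Set.Finite.mem_toFinset]
      exact Relation.ReflTransGen.refl
    have := Finset.card_pos.mpr ⟨u, this⟩
    omega
  | succ n ih =>
    intro u hcard
    by_cases hg : G.Good u
    · exact ⟨{G.av u}, by rintro p hp; simp at hp; exact ⟨u, hg, hp⟩, by simp⟩
    · rw [Good] at hg
      push_neg at hg
      obtain ⟨hnotmin, hnocycle⟩ := hg
      have hemits : G.emits u := by
        by_contra hne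
        obtain ⟨w, hw, hnb⟩ := hnotmin
        rcases Relation.ReflTransGen.cases_head hw with rfl | ⟨c, ⟨e, hse, _⟩, _⟩
        · exact hnb Relation.ReflTransGen.refl
        · exact hne ⟨e, hse⟩
      -- each r e has strictly smaller reach set
      have hkey : ∀ e ∈ (G.rowFinite u).toFinset,
          (Set.toFinite {w | G.Reaches (G.r e) w}).toFinset.card ≤ n := by
        intro e he
        have hse : G.s e = u := by simpa [Set.Finite.mem_toFinset] using he
        have hssub : (Set.toFinite {w | G.Reaches (G.r e) w}).toFinset ⊂
            (Set.toFinite {w | G.Reaches u w}).toFinset := by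
          constructor
          · intro w hw
            simp only [Set.Finite.mem_toFinset, Set.mem_setOf_eq] at hw ⊢
            exact reaches_of_edge_reaches e hse hw
          · intro hsub
            have : u ∈ (Set.toFinite {w | G.Reaches (G.r e) w}).toFinset := by
              apply hsub
              simp only [Set.Finite.mem_toFinset, Set.mem_setOf_eq]
              exact Relation.ReflTransGen.refl
            simp only [Set.Finite.mem_toFinset, Set.mem_setOf_eq] at this
            exact hnocycle e hse this
        have := Finset.card_lt_card hssub
        omega
      -- choose decompositions
      have hch : ∀ e : {e // e ∈ (G.rowFinite u).toFinset},
          ∃ l : Multiset G.M, (∀ p ∈ l, ∃ v, G.Good v ∧ p = G.av v) ∧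
            l.sum = G.av (G.r e.1) :=
        fun e => ih (G.r e.1) (hkey e.1 e.2)
      choose L hL1 hL2 using hch
      refine ⟨∑ e ∈ (G.rowFinite u).toFinset.attach, L e, ?_, ?_⟩
      · intro p hp
        rw [Multiset.mem_sum] at hp
        obtain ⟨e, _, hpe⟩ := hp
        exact hL1 e p hpe
      · have hgen : ∀ (s : Finset {e // e ∈ (G.rowFinite u).toFinset})
            (f : {e // e ∈ (G.rowFinite u).toFinset} → Multiset G.M),
            (∑ e ∈ s, f e).sum = ∑ e ∈ s, (f e).sum := by
          intro s f
          induction s using Finset.cons_induction with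
          | empty => simp
          | cons a s ha ih => simp [Finset.sum_insert ha, Multiset.sum_add, ih]
        rw [hgen]
        have : ∀ e ∈ (G.rowFinite u).toFinset.attach, (L e).sum = G.av (G.r e.1) :=
          fun e _ => hL2 e
        rw [Finset.sum_congr rfl this, Finset.sum_attach _ (fun e => G.av (G.r e)),
          ← av_eq_sum_rr u hemits]

lemma av_primes [Finite G.V] (u : G.V) :
    ∃ l : Multiset G.M, (∀ p ∈ l, G.IsPrime p) ∧ l.sum = G.av u := by
  obtain ⟨l, hl1, hl2⟩ := av_sum_good u
  refine ⟨l, fun p hp => ?_, hl2⟩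
  obtain ⟨v, hv, rfl⟩ := hl1 p hp
  exact good_prime hv

end RFGraph

/-- For a finite graph, the graph monoid `M_E` is primely generated:
every element is a (finite) sum of prime elements. -/
theorem stmt3 (G : RFGraph) [Finite G.V] [Finite G.Edge] (x : G.M) :
    ∃ l : Multiset G.M, (∀ p ∈ l, G.IsPrime p) ∧ l.sum = x := by
  obtain ⟨α, rfl⟩ := G.graphCon.mk'_surjective x
  induction α using Finsupp.induction with
  | zero => exact ⟨0, by simp, by simp⟩
  | single_add a b f _ _ ih =>
    obtain ⟨l, hl1, hl2⟩ := ih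
    obtain ⟨la, ha1, ha2⟩ := RFGraph.av_primes (G := G) a
    refine ⟨b • la + l, ?_, ?_⟩
    · intro p hp
      rcases Multiset.mem_add.mp hp with h | h
      · exact ha1 p (RFGraph.nsmul_mem h)
      · exact hl1 p h
    · rw [Multiset.sum_add, RFGraph.nsmul_sum, ha2, hl2, map_add]
      congr 1
      rw [show Finsupp.single a b = b • Finsupp.single a (1 : ℕ) by
        simp [Finsupp.smul_single], map_nsmul]
      rfl
end
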